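/- Let G and G' be two vertex-disjoint graphs, each with at least two vertices, let v be a vertex of G and v' a vertex of G', and let G'' be the graph obtained from the disjoint union of G and G' by adding the edge vv'. Then: (i) a set S'' of vertices of G'' is a type I set for v' in G'' with L_{S''}(v') = 0 if and only if S'' = S ∪ S' where S = S'' ∩ V(G) is a type I set for v in G, S' = S'' ∩ V(G') is a type I set for v' in G', and the pair (L_S(v), L_{S'}(v')) belongs to {(−2,0), (−1,0), (1,0)}; (ii) moreover, if R' ⊆ V(G') is a type I set for v' in G' with L_{R'}(v') = −1 and S ⊆ V(G) is a type I set for v in G with L_S(v) ∈ {−2, −1, 1}, then S'' = S ∪ (R' ∪ {v'}) is a type I set for v' in G'' with L_{S''}(v') = 0. -/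

import Mathlib

/-- A set of vertices is independent: no two of its vertices are adjacent. -/
def IndepSet {V : Type*} (G : SimpleGraph V) (S : Set V) : Prop :=
  ∀ u ∈ S, ∀ w ∈ S, ¬ G.Adj u w

/-- `S` is a type I set for `v` in `G`: `S` is independent, every vertex
`u ∉ S ∪ {v}` has at least one and at most two neighbors in `S`, and `v` either
belongs to `S` or has at most two neighbors in `S`. -/
def TypeISet {V : Type*} (G : SimpleGraph V) (v : V) (S : Set V) : Prop :=
  IndepSet G S ∧
    (∀ u, u ∉ S → u ≠ v →
      1 ≤ (S ∩ G.neighborSet u).ncard ∧ (S ∩ G.neighborSet u).ncard ≤ 2) ∧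
    (v ∈ S ∨ (S ∩ G.neighborSet v).ncard ≤ 2)

/-- The labeling `L_S(v) = l` : `0` if `v ∈ S`; `k ≥ 1` if `v ∉ S` and `v` has exactly
`k` neighbors in `S`; `-1` if `N[v] ∩ S = ∅` and every neighbor of `v` has exactly one
neighbor in `S`; `-2` if `N[v] ∩ S = ∅` and some neighbor of `v` has exactly two
neighbors in `S`. -/
def HasLabel {V : Type*} (G : SimpleGraph V) (v : V) (S : Set V) (l : ℤ) : Prop :=
  (v ∈ S ∧ l = 0) ∨
  (v ∉ S ∧ ∃ k : ℕ, 1 ≤ k ∧ (S ∩ G.neighborSet v).ncard = k ∧ l = (k : ℤ)) ∨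
  (v ∉ S ∧ S ∩ G.neighborSet v = ∅ ∧
    (∀ u ∈ G.neighborSet v, (S ∩ G.neighborSet u).ncard = 1) ∧ l = -1) ∨
  (v ∉ S ∧ S ∩ G.neighborSet v = ∅ ∧
    (∃ u ∈ G.neighborSet v, (S ∩ G.neighborSet u).ncard = 2) ∧ l = -2)

/-- The star `K_{1,r}` with center `none` and the `r` leaves `some i`. -/
def starGraph (r : ℕ) : SimpleGraph (Option (Fin r)) where
  Adj a b := (a = none ∧ b ≠ none) ∨ (a ≠ none ∧ b = none)
  symm := by constructor; intro a b h; tauto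
  loopless := by constructor; intro a h; tauto

/-- The graph obtained from `G` by adding a new vertex `none` adjacent only to `v`. -/
def addLeaf {V : Type*} (G : SimpleGraph V) (v : V) : SimpleGraph (Option V) where
  Adj a b := match a, b with
    | some x, some y => G.Adj x y
    | none, some y => y = v
    | some x, none => x = v
    | none, none => False
  symm := by
    constructor
    intro a b h
    match a, b with
    | some x, some y => exact h.symm
    | none, some y => exact h
    | some x, none => exact h
    | none, none => exact h
  loopless := by
    constructor
    intro a h
    match a with
    | some x => exact G.irrefl h
    | none => exact h

/-- The graph obtained from the disjoint union of `G` and `H` by adding the edge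
between `v` (in `G`) and `v'` (in `H`). -/
def joinAt {V W : Type*} (G : SimpleGraph V) (H : SimpleGraph W) (v : V) (v' : W) :
    SimpleGraph (V ⊕ W) where
  Adj a b := match a, b with
    | Sum.inl x, Sum.inl y => G.Adj x y
    | Sum.inr x, Sum.inr y => H.Adj x y
    | Sum.inl x, Sum.inr y => x = v ∧ y = v'
    | Sum.inr x, Sum.inl y => x = v' ∧ y = v
  symm := by
    constructor
    intro a b h
    match a, b with
    | Sum.inl x, Sum.inl y => exact h.symm
    | Sum.inr x, Sum.inr y => exact h.symm
    | Sum.inl x, Sum.inr y => exact ⟨h.2, h.1⟩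
    | Sum.inr x, Sum.inl y => exact ⟨h.2, h.1⟩
  loopless := by
    constructor
    intro a h
    match a with
    | Sum.inl x => exact G.irrefl h
    | Sum.inr x => exact H.irrefl h

set_option linter.unusedSectionVars false
section Helpers

variable {V W : Type*} (G : SimpleGraph V) (G' : SimpleGraph W) (v : V) (v' : W)

lemma joinAt_adj_ll {x y : V} : (joinAt G G' v v').Adj (Sum.inl x) (Sum.inl y) ↔ G.Adj x y :=
  Iff.rfl

lemma joinAt_adj_rr {x y : W} : (joinAt G G' v v').Adj (Sum.inr x) (Sum.inr y) ↔ G'.Adj x y :=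
  Iff.rfl

lemma joinAt_adj_lr {x : V} {y : W} :
    (joinAt G G' v v').Adj (Sum.inl x) (Sum.inr y) ↔ x = v ∧ y = v' := Iff.rfl

lemma joinAt_adj_rl {x : W} {y : V} :
    (joinAt G G' v v').Adj (Sum.inr x) (Sum.inl y) ↔ x = v' ∧ y = v := Iff.rfl

lemma nbhd_inl {u : V} (hu : u ≠ v) :
    (joinAt G G' v v').neighborSet (Sum.inl u) = Sum.inl '' G.neighborSet u := by
  ext a
  cases a with
  | inl x => simp [SimpleGraph.mem_neighborSet, joinAt_adj_ll]
  | inr x =>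
    simp only [SimpleGraph.mem_neighborSet, joinAt_adj_lr]
    simp [hu]

lemma nbhd_inl_v :
    (joinAt G G' v v').neighborSet (Sum.inl v) =
      Sum.inl '' G.neighborSet v ∪ {Sum.inr v'} := by
  ext a
  cases a with
  | inl x => simp [SimpleGraph.mem_neighborSet, joinAt_adj_ll]
  | inr x =>
    simp only [SimpleGraph.mem_neighborSet, joinAt_adj_lr]
    simp

lemma nbhd_inr {u : W} (hu : u ≠ v') :
    (joinAt G G' v v').neighborSet (Sum.inr u) = Sum.inr '' G'.neighborSet u := by
  ext a
  cases a with
  | inr x => simp [SimpleGraph.mem_neighborSet, joinAt_adj_rr]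
  | inl x =>
    simp only [SimpleGraph.mem_neighborSet, joinAt_adj_rl]
    simp [hu]

lemma nbhd_inr_v :
    (joinAt G G' v v').neighborSet (Sum.inr v') =
      Sum.inr '' G'.neighborSet v' ∪ {Sum.inl v} := by
  ext a
  cases a with
  | inr x => simp [SimpleGraph.mem_neighborSet, joinAt_adj_rr]
  | inl x =>
    simp only [SimpleGraph.mem_neighborSet, joinAt_adj_rl]
    simp

lemma inter_image_inl (S'' : Set (V ⊕ W)) (A : Set V) :
    S'' ∩ Sum.inl '' A = Sum.inl '' (Sum.inl ⁻¹' S'' ∩ A) := by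
  ext a
  cases a with
  | inl x => simp [Set.mem_preimage]
  | inr x => simp

lemma inter_image_inr (S'' : Set (V ⊕ W)) (A : Set W) :
    S'' ∩ Sum.inr '' A = Sum.inr '' (Sum.inr ⁻¹' S'' ∩ A) := by
  ext a
  cases a with
  | inr x => simp [Set.mem_preimage]
  | inl x => simp

lemma ncard_inter_image_inl (S'' : Set (V ⊕ W)) (A : Set V) :
    (S'' ∩ Sum.inl '' A).ncard = (Sum.inl ⁻¹' S'' ∩ A).ncard := by
  rw [inter_image_inl, Set.ncard_image_of_injective _ Sum.inl_injective]

lemma ncard_inter_image_inr (S'' : Set (V ⊕ W)) (A : Set W) :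
    (S'' ∩ Sum.inr '' A).ncard = (Sum.inr ⁻¹' S'' ∩ A).ncard := by
  rw [inter_image_inr, Set.ncard_image_of_injective _ Sum.inr_injective]

lemma ncard_nbhd_inl {u : V} (hu : u ≠ v) (S'' : Set (V ⊕ W)) :
    (S'' ∩ (joinAt G G' v v').neighborSet (Sum.inl u)).ncard =
      (Sum.inl ⁻¹' S'' ∩ G.neighborSet u).ncard := by
  rw [nbhd_inl G G' v v' hu, ncard_inter_image_inl]

lemma ncard_nbhd_inr {u : W} (hu : u ≠ v') (S'' : Set (V ⊕ W)) :
    (S'' ∩ (joinAt G G' v v').neighborSet (Sum.inr u)).ncard =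
      (Sum.inr ⁻¹' S'' ∩ G'.neighborSet u).ncard := by
  rw [nbhd_inr G G' v v' hu, ncard_inter_image_inr]

variable [Fintype V] [Fintype W]

lemma ncard_nbhd_inl_v_mem (S'' : Set (V ⊕ W)) (h : Sum.inr v' ∈ S'') :
    (S'' ∩ (joinAt G G' v v').neighborSet (Sum.inl v)).ncard =
      (Sum.inl ⁻¹' S'' ∩ G.neighborSet v).ncard + 1 := by
  rw [nbhd_inl_v, Set.inter_union_distrib_left]
  have h2 : S'' ∩ {Sum.inr v'} = {Sum.inr v'} := by
    rw [Set.inter_eq_right]; simpa using h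
  rw [h2, Set.ncard_union_eq, ncard_inter_image_inl, Set.ncard_singleton]
  · rw [Set.disjoint_left]
    rintro a ⟨-, y, -, rfl⟩ ha
    simp at ha

lemma ncard_nbhd_inl_v_not (S'' : Set (V ⊕ W)) (h : Sum.inr v' ∉ S'') :
    (S'' ∩ (joinAt G G' v v').neighborSet (Sum.inl v)).ncard =
      (Sum.inl ⁻¹' S'' ∩ G.neighborSet v).ncard := by
  rw [nbhd_inl_v, Set.inter_union_distrib_left]
  have h2 : S'' ∩ {Sum.inr v'} = ∅ := by
    ext a; simp; rintro ha rfl; exact h ha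
  rw [h2, Set.union_empty, ncard_inter_image_inl]

lemma ncard_nbhd_inr_v_mem (S'' : Set (V ⊕ W)) (h : Sum.inl v ∈ S'') :
    (S'' ∩ (joinAt G G' v v').neighborSet (Sum.inr v')).ncard =
      (Sum.inr ⁻¹' S'' ∩ G'.neighborSet v').ncard + 1 := by
  rw [nbhd_inr_v, Set.inter_union_distrib_left]
  have h2 : S'' ∩ {Sum.inl v} = {Sum.inl v} := by
    rw [Set.inter_eq_right]; simpa using h
  rw [h2, Set.ncard_union_eq, ncard_inter_image_inr, Set.ncard_singleton]
  · rw [Set.disjoint_left]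
    rintro a ⟨-, y, -, rfl⟩ ha
    simp at ha

lemma ncard_nbhd_inr_v_not (S'' : Set (V ⊕ W)) (h : Sum.inl v ∉ S'') :
    (S'' ∩ (joinAt G G' v v').neighborSet (Sum.inr v')).ncard =
      (Sum.inr ⁻¹' S'' ∩ G'.neighborSet v').ncard := by
  rw [nbhd_inr_v, Set.inter_union_distrib_left]
  have h2 : S'' ∩ {Sum.inl v} = ∅ := by
    ext a; simp; rintro ha rfl; exact h ha
  rw [h2, Set.union_empty, ncard_inter_image_inr]

lemma hasLabel_zero_mem {G : SimpleGraph V} {x : V} {S : Set V}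
    (h : HasLabel G x S 0) : x ∈ S := by
  rcases h with ⟨h, -⟩ | ⟨-, k, hk, -, hk0⟩ | ⟨-, -, -, h⟩ | ⟨-, -, -, h⟩
  · exact h
  · omega
  · omega
  · omega

lemma hasLabel_src {G : SimpleGraph V} {S : Set V} {l : ℤ}
    (h : HasLabel G v S l) (hl : l = -2 ∨ l = -1 ∨ l = 1) :
    v ∉ S ∧ (S ∩ G.neighborSet v).ncard ≤ 1 := by
  rcases h with ⟨-, rfl⟩ | ⟨hv, k, hk, hn, rfl⟩ | ⟨hv, he, -, rfl⟩ | ⟨hv, he, -, rfl⟩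
  · omega
  · have : k = 1 := by omega
    exact ⟨hv, by omega⟩
  · exact ⟨hv, by rw [he]; simp⟩
  · exact ⟨hv, by rw [he]; simp⟩

end Helpers
theorem statement17 {V W : Type*} [Fintype V] [Fintype W] [Nontrivial V]
    [Nontrivial W] (G : SimpleGraph V) (G' : SimpleGraph W) (v : V) (v' : W) :
    (∀ S'' : Set (V ⊕ W),
      (TypeISet (joinAt G G' v v') (Sum.inr v') S'' ∧
          HasLabel (joinAt G G' v v') (Sum.inr v') S'' 0) ↔
        ∃ (S : Set V) (S' : Set W), S = Sum.inl ⁻¹' S'' ∧ S' = Sum.inr ⁻¹' S'' ∧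
          S'' = Sum.inl '' S ∪ Sum.inr '' S' ∧ TypeISet G v S ∧ TypeISet G' v' S' ∧
          ((HasLabel G v S (-2) ∧ HasLabel G' v' S' 0) ∨
           (HasLabel G v S (-1) ∧ HasLabel G' v' S' 0) ∨
           (HasLabel G v S 1 ∧ HasLabel G' v' S' 0))) ∧
    (∀ (R' : Set W) (S : Set V), TypeISet G' v' R' → HasLabel G' v' R' (-1) →
      TypeISet G v S →
      (HasLabel G v S (-2) ∨ HasLabel G v S (-1) ∨ HasLabel G v S 1) →
      TypeISet (joinAt G G' v v') (Sum.inr v')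
          (Sum.inl '' S ∪ Sum.inr '' (R' ∪ {v'})) ∧
        HasLabel (joinAt G G' v v') (Sum.inr v')
          (Sum.inl '' S ∪ Sum.inr '' (R' ∪ {v'})) 0) := by
  constructor
  · intro S''
    constructor
    · rintro ⟨⟨hInd, hDeg, -⟩, hL⟩
      have hv' : Sum.inr v' ∈ S'' := hasLabel_zero_mem hL
      have hvnot : v ∉ Sum.inl ⁻¹' S'' := fun h =>
        hInd _ h _ hv' ((joinAt_adj_lr G G' v v').mpr ⟨rfl, rfl⟩)
      have hTS : TypeISet G v (Sum.inl ⁻¹' S'') := by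
        refine ⟨?_, ?_, ?_⟩
        · intro a ha b hb hab
          exact hInd _ ha _ hb ((joinAt_adj_ll G G' v v').mpr hab)
        · intro u hu huv
          have := hDeg (Sum.inl u) hu (by simp)
          rwa [ncard_nbhd_inl G G' v v' huv] at this
        · right
          have := hDeg (Sum.inl v) hvnot (by simp)
          rw [ncard_nbhd_inl_v_mem G G' v v' S'' hv'] at this
          omega
      have hTS' : TypeISet G' v' (Sum.inr ⁻¹' S'') := by
        refine ⟨?_, ?_, Or.inl hv'⟩
        · intro a ha b hb hab
          exact hInd _ ha _ hb ((joinAt_adj_rr G G' v v').mpr hab)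
        · intro u hu huv
          have := hDeg (Sum.inr u) hu (by simp [huv])
          rwa [ncard_nbhd_inr G G' v v' huv] at this
      refine ⟨Sum.inl ⁻¹' S'', Sum.inr ⁻¹' S'', rfl, rfl, ?_, hTS, hTS', ?_⟩
      · ext a
        cases a with
        | inl x => simp
        | inr x => simp
      · have hS'0 : HasLabel G' v' (Sum.inr ⁻¹' S'') 0 := Or.inl ⟨hv', rfl⟩
        have hd := hDeg (Sum.inl v) hvnot (by simp)
        rw [ncard_nbhd_inl_v_mem G G' v v' S'' hv'] at hd
        by_cases hn : (Sum.inl ⁻¹' S'' ∩ G.neighborSet v).ncard = 1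
        · right; right
          exact ⟨Or.inr (Or.inl ⟨hvnot, 1, le_refl 1, hn, by norm_num⟩), hS'0⟩
        · have hn0 : Sum.inl ⁻¹' S'' ∩ G.neighborSet v = ∅ :=
            Set.ncard_eq_zero (Set.toFinite _) |>.mp (by omega)
          have hnb : ∀ u ∈ G.neighborSet v,
              1 ≤ (Sum.inl ⁻¹' S'' ∩ G.neighborSet u).ncard ∧
                (Sum.inl ⁻¹' S'' ∩ G.neighborSet u).ncard ≤ 2 := by
            intro u hu
            have hus : u ∉ Sum.inl ⁻¹' S'' := fun h =>
              (Set.eq_empty_iff_forall_notMem.mp hn0 u) ⟨h, hu⟩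
            have hune : u ≠ v := fun h => G.loopless.irrefl v (h ▸ hu)
            exact hTS.2.1 u hus hune
          by_cases hex : ∃ u ∈ G.neighborSet v,
              (Sum.inl ⁻¹' S'' ∩ G.neighborSet u).ncard = 2
          · left
            exact ⟨Or.inr (Or.inr (Or.inr ⟨hvnot, hn0, hex, rfl⟩)), hS'0⟩
          · right; left
            refine ⟨Or.inr (Or.inr (Or.inl ⟨hvnot, hn0, ?_, rfl⟩)), hS'0⟩
            intro u hu
            have h1 := hnb u hu
            push_neg at hex
            have h2 := hex u hu
            omega
    · rintro ⟨S, S', hS, hS', rfl, hTS, hTS', hlab⟩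
      have hS'0 : HasLabel G' v' S' 0 := by
        rcases hlab with ⟨-, h⟩ | ⟨-, h⟩ | ⟨-, h⟩ <;> exact h
      have hsrc : v ∉ S ∧ (S ∩ G.neighborSet v).ncard ≤ 1 := by
        rcases hlab with ⟨h, -⟩ | ⟨h, -⟩ | ⟨h, -⟩
        exacts [hasLabel_src v h (Or.inl rfl), hasLabel_src v h (Or.inr (Or.inl rfl)),
          hasLabel_src v h (Or.inr (Or.inr rfl))]
      have hv'S' : v' ∈ S' := hasLabel_zero_mem hS'0
      have hpl : Sum.inl ⁻¹' (Sum.inl '' S ∪ Sum.inr '' S') = S := by ext x; simp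
      have hpr : Sum.inr ⁻¹' (Sum.inl '' S ∪ Sum.inr '' S') = S' := by ext x; simp
      have hmem : Sum.inr v' ∈ Sum.inl '' S ∪ Sum.inr '' S' := Or.inr ⟨v', hv'S', rfl⟩
      refine ⟨⟨?_, ?_, Or.inl hmem⟩, Or.inl ⟨hmem, rfl⟩⟩
      · rintro a (⟨x, hx, rfl⟩ | ⟨x, hx, rfl⟩) b (⟨y, hy, rfl⟩ | ⟨y, hy, rfl⟩) hab
        · exact hTS.1 x hx y hy hab
        · exact hsrc.1 (hab.1 ▸ hx)
        · exact hsrc.1 (hab.2 ▸ hy)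
        · exact hTS'.1 x hx y hy hab
      · rintro (u | u) ha hane
        · have huS : u ∉ S := fun h => ha (Or.inl ⟨u, h, rfl⟩)
          by_cases hu : u = v
          · rw [hu, ncard_nbhd_inl_v_mem G G' v v' _ hmem, hpl]
            omega
          · rw [ncard_nbhd_inl G G' v v' hu, hpl]
            exact hTS.2.1 u huS hu
        · have hu : u ≠ v' := fun h => hane (by rw [h])
          rw [ncard_nbhd_inr G G' v v' hu, hpr]
          exact hTS'.2.1 u (fun h => ha (Or.inr ⟨u, h, rfl⟩)) hu
  · intro R' S hTR' hLR' hTS hlab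
    have hlr : v' ∉ R' ∧ R' ∩ G'.neighborSet v' = ∅ ∧
        ∀ u ∈ G'.neighborSet v', (R' ∩ G'.neighborSet u).ncard = 1 := by
      rcases hLR' with ⟨-, h⟩ | ⟨-, k, hk, -, hk2⟩ | ⟨a, b, c, -⟩ | ⟨-, -, -, h⟩
      · exact absurd h (by norm_num)
      · omega
      · exact ⟨a, b, c⟩
      · exact absurd h (by norm_num)
    obtain ⟨hv'R, hRN, hall⟩ := hlr
    have hsrc : v ∉ S ∧ (S ∩ G.neighborSet v).ncard ≤ 1 := by
      rcases hlab with h | h | h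
      exacts [hasLabel_src v h (Or.inl rfl), hasLabel_src v h (Or.inr (Or.inl rfl)),
        hasLabel_src v h (Or.inr (Or.inr rfl))]
    have key : ∀ u : W, u ≠ v' → u ∉ R' →
        1 ≤ ((R' ∪ {v'}) ∩ G'.neighborSet u).ncard ∧
          ((R' ∪ {v'}) ∩ G'.neighborSet u).ncard ≤ 2 := by
      intro u hune huR
      by_cases hadj : G'.Adj u v'
      · have h1 : {v'} ∩ G'.neighborSet u = {v'} := by
          rw [Set.inter_eq_left, Set.singleton_subset_iff]
          exact hadj
        have hdis : Disjoint (R' ∩ G'.neighborSet u) ({v'} : Set W) := by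
          rw [Set.disjoint_left]
          rintro x ⟨hx, -⟩ hx2
          exact hv'R (hx2 ▸ hx)
        rw [Set.union_inter_distrib_right, h1, Set.ncard_union_eq hdis,
          hall u hadj.symm, Set.ncard_singleton]
        omega
      · have h1 : {v'} ∩ G'.neighborSet u = ∅ := by
          ext x
          simp only [Set.mem_inter_iff, Set.mem_singleton_iff, SimpleGraph.mem_neighborSet,
            Set.mem_empty_iff_false, iff_false, not_and]
          rintro rfl h
          exact hadj h
        rw [Set.union_inter_distrib_right, h1, Set.union_empty]
        exact hTR'.2.1 u huR hune
    have hpl : Sum.inl ⁻¹' (Sum.inl '' S ∪ Sum.inr '' (R' ∪ {v'})) = S := by ext x; simp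
    have hpr : Sum.inr ⁻¹' (Sum.inl '' S ∪ Sum.inr '' (R' ∪ {v'})) = R' ∪ {v'} := by
      ext x; simp
    have hmem : Sum.inr v' ∈ Sum.inl '' S ∪ Sum.inr '' (R' ∪ {v'}) :=
      Or.inr ⟨v', Or.inr rfl, rfl⟩
    refine ⟨⟨?_, ?_, Or.inl hmem⟩, Or.inl ⟨hmem, rfl⟩⟩
    · rintro a (⟨x, hx, rfl⟩ | ⟨x, hx, rfl⟩) b (⟨y, hy, rfl⟩ | ⟨y, hy, rfl⟩) hab
      · exact hTS.1 x hx y hy hab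
      · exact hsrc.1 (hab.1 ▸ hx)
      · exact hsrc.1 (hab.2 ▸ hy)
      · rcases hx with hx | rfl
        · rcases hy with hy | rfl
          · exact hTR'.1 x hx y hy hab
          · exact Set.eq_empty_iff_forall_notMem.mp hRN x ⟨hx, hab.symm⟩
        · rcases hy with hy | rfl
          · exact Set.eq_empty_iff_forall_notMem.mp hRN y ⟨hy, hab⟩
          · exact G'.loopless.irrefl _ hab
    · rintro (u | u) ha hane
      · have huS : u ∉ S := fun h => ha (Or.inl ⟨u, h, rfl⟩)
        by_cases hu : u = v
        · rw [hu, ncard_nbhd_inl_v_mem G G' v v' _ hmem, hpl]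
          omega
        · rw [ncard_nbhd_inl G G' v v' hu, hpl]
          exact hTS.2.1 u huS hu
      · have hu : u ≠ v' := fun h => hane (by rw [h])
        have huR : u ∉ R' := fun h => ha (Or.inr ⟨u, Or.inl h, rfl⟩)
        rw [ncard_nbhd_inr G G' v v' hu, hpr]
        exact key u hu huR
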